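/- Fix n ≥ 0 and ν ∈ ℝ^{n+1} with ν ≠ 0, and let w(s) = u(s)/‖u(s)‖ where u(s)ₖ = exp(−2ks)·νₖ. Let j be the smallest index with νⱼ ≠ 0 and m the largest index with ν_m ≠ 0. Then w(s) converges as s → +∞ to sgn(νⱼ)·eⱼ, and w(s) converges as s → −∞ to sgn(ν_m)·e_m, where e₀,…,eₙ is the standard basis of ℝ^{n+1} and sgn denotes the sign (±1) of a nonzero real number. -/

import Mathlib

/-- `u(s)ₖ = exp(−2ks)·νₖ`. -/
noncomputable def uCurve (n : ℕ) (ν : EuclideanSpace ℝ (Fin (n + 1))) (s : ℝ) :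
    EuclideanSpace ℝ (Fin (n + 1)) :=
  WithLp.toLp 2 (fun k => Real.exp (-2 * (k : ℝ) * s) * ν k)

/-- `w(s) = u(s)/‖u(s)‖`, the normalized curve on the unit sphere. -/
noncomputable def wCurve (n : ℕ) (ν : EuclideanSpace ℝ (Fin (n + 1))) (s : ℝ) :
    EuclideanSpace ℝ (Fin (n + 1)) :=
  ‖uCurve n ν s‖⁻¹ • uCurve n ν s

open Filter Real

lemma key (n : ℕ) (ν : EuclideanSpace ℝ (Fin (n + 1))) (l : Filter ℝ)
    (i : Fin (n + 1)) (hi : ν i ≠ 0)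
    (hk : ∀ k : Fin (n+1), k ≠ i →
      Tendsto (fun s => Real.exp (2 * ((i:ℝ) - (k:ℝ)) * s) * ν k) l (nhds 0)) :
    Tendsto (wCurve n ν) l
      (nhds (Real.sign (ν i) • EuclideanSpace.single i (1 : ℝ))) := by
  set g : ℝ → EuclideanSpace ℝ (Fin (n+1)) :=
    fun s => Real.exp (2 * (i:ℝ) * s) • uCurve n ν s with hg
  have hgk : ∀ s k, g s k = Real.exp (2 * ((i:ℝ) - (k:ℝ)) * s) * ν k := by
    intro s k
    rw [hg]
    simp only [uCurve, PiLp.smul_apply, smul_eq_mul, PiLp.toLp_apply]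
    rw [← mul_assoc, ← Real.exp_add]
    ring_nf
  have hw : ∀ s, wCurve n ν s = ‖g s‖⁻¹ • g s := by
    intro s
    have he : Real.exp (2 * (i:ℝ) * s) ≠ 0 := (Real.exp_pos _).ne'
    rw [wCurve, hg, norm_smul, Real.norm_eq_abs,
      abs_of_pos (Real.exp_pos _), mul_inv, smul_smul]
    congr 1
    rcases eq_or_ne ‖uCurve n ν s‖ 0 with h0 | h0
    · simp [h0]
    · field_simp
  set x₀ : EuclideanSpace ℝ (Fin (n+1)) := ν i • EuclideanSpace.single i (1:ℝ) with hx₀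
  have hgt : Tendsto g l (nhds x₀) := by
    rw [show g = fun s => g s from rfl]
    have : Tendsto (fun s k => g s k) l (nhds (fun k => x₀ k)) := by
      rw [tendsto_pi_nhds]
      intro k
      by_cases hki : k = i
      · subst hki
        have : (fun s => g s k) = fun _ => ν k := by
          funext s; rw [hgk]; simp
        rw [this]
        have hx : x₀ k = ν k := by
          simp [hx₀, EuclideanSpace.single_apply]
        rw [hx]
        exact tendsto_const_nhds
      · have hx : x₀ k = 0 := by
          simp [hx₀, EuclideanSpace.single_apply, hki]
        rw [hx]
        have := hk k hki
        convert this using 2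
        exact (hgk _ _)
    exact ((PiLp.continuous_toLp 2 (fun _ : Fin (n+1) => ℝ)).tendsto _).comp this
  have hx0norm : ‖x₀‖ = |ν i| := by
    rw [hx₀, norm_smul, EuclideanSpace.norm_single, Real.norm_eq_abs]
    simp
  have hxne : ‖x₀‖ ≠ 0 := by rw [hx0norm]; exact abs_ne_zero.2 hi
  have hlim : Tendsto (fun s => ‖g s‖⁻¹ • g s) l (nhds (‖x₀‖⁻¹ • x₀)) :=
    ((hgt.norm.inv₀ hxne).smul hgt)
  have hfinal : ‖x₀‖⁻¹ • x₀ = Real.sign (ν i) • EuclideanSpace.single i (1:ℝ) := by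
    rw [hx₀, hx0norm, smul_smul]
    congr 1
    rcases hi.lt_or_gt with h | h
    · rw [Real.sign_of_neg h, abs_of_neg h]
      field_simp
    · rw [Real.sign_of_pos h, abs_of_pos h]
      field_simp
  rw [← hfinal]
  simpa only [← hw] using hlim


/-- Asymptotics of the normalized gradient flow line `w(s) = u(s)/‖u(s)‖`: if `j`
is the smallest index with `νⱼ ≠ 0` and `m` the largest index with `ν_m ≠ 0`,
then `w(s) → sgn(νⱼ)·eⱼ` as `s → +∞` and `w(s) → sgn(ν_m)·e_m` as `s → −∞`. -/
theorem stmt13 (n : ℕ) (ν : EuclideanSpace ℝ (Fin (n + 1)))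
    (j m : Fin (n + 1))
    (hj : ν j ≠ 0) (hjmin : ∀ k, k < j → ν k = 0)
    (hm : ν m ≠ 0) (hmmax : ∀ k, m < k → ν k = 0) :
    Filter.Tendsto (wCurve n ν) Filter.atTop
      (nhds (Real.sign (ν j) • EuclideanSpace.single j (1 : ℝ))) ∧
    Filter.Tendsto (wCurve n ν) Filter.atBot
      (nhds (Real.sign (ν m) • EuclideanSpace.single m (1 : ℝ))) := by
  constructor
  · apply key n ν atTop j hj
    intro k hkj
    rcases lt_or_gt_of_ne hkj with h | h
    · simp [hjmin k h]
    · have hc : 2 * ((j:ℝ) - (k:ℝ)) < 0 := by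
        have : (j:ℝ) < (k:ℝ) := by exact_mod_cast h
        linarith
      have : Tendsto (fun s => Real.exp (2 * ((j:ℝ) - (k:ℝ)) * s)) atTop (nhds 0) :=
        Real.tendsto_exp_atBot.comp ((tendsto_const_mul_atBot_of_neg hc).2 tendsto_id)
      simpa using this.mul_const (ν k)
  · apply key n ν atBot m hm
    intro k hkm
    rcases lt_or_gt_of_ne hkm with h | h
    · have hc : (0:ℝ) < 2 * ((m:ℝ) - (k:ℝ)) := by
        have : (k:ℝ) < (m:ℝ) := by exact_mod_cast h
        linarith
      have : Tendsto (fun s => Real.exp (2 * ((m:ℝ) - (k:ℝ)) * s)) atBot (nhds 0) :=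
        Real.tendsto_exp_atBot.comp ((tendsto_const_mul_atBot_of_pos hc).2 tendsto_id)
      simpa using this.mul_const (ν k)
    · simp [hmmax k h]
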